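/- Let 1 ≤ p < ∞ and let (U_i)_{i∈I} and (V_i)_{i∈I} be two families of measurable subsets of X over the same countable index set, each covering X, with 0 < μ(U_i), μ(V_i) < ∞, such that every x ∈ X lies in at most N of the sets U_i and in at most N' of the sets V_i. Suppose they are m_w-equivalent: there are constants C₁, C₂ > 0 with C₁ μ(U_i) ≤ μ(V_i) ≤ C₂ μ(U_i) for all i, and a constant C' with sup_{x∈U_i} sup_{y∈V_i} m_w(x,y) ≤ C' for all i, where m_w(x,y) = max(w(x)/w(y), w(y)/w(x)). Then there exist constants 0 < c ≤ C < ∞ such that for all complex sequences (λ_i)_{i∈I} (with both sides possibly infinite): c ‖Σ_{i∈I} |λ_i| χ_{V_i}‖_{L^p_w} ≤ ‖Σ_{i∈I} |λ_i| χ_{U_i}‖_{L^p_w} ≤ C ‖Σ_{i∈I} |λ_i| χ_{V_i}‖_{L^p_w}. (Lemma 5.3 specialized to Y = L^p_w, flat spaces.) -/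

import Mathlib

open MeasureTheory
open scoped ENNReal NNReal

private lemma aux_tsum_rpow_le {ι : Type*} (f : ι → ℝ≥0∞) {p : ℝ} (hp : 1 ≤ p) :
    ∑' i, f i ^ p ≤ (∑' i, f i) ^ p := by
  rw [ENNReal.tsum_eq_iSup_sum (f := fun i => f i ^ p)]
  refine iSup_le fun s => ?_
  calc ∑ i ∈ s, f i ^ p ≤ (∑ i ∈ s, f i) ^ p := by
          classical
          induction s using Finset.induction with
          | empty => simp
          | insert _ _ h ih =>
            rw [Finset.sum_insert h, Finset.sum_insert h]
            exact le_trans (add_le_add_right ih _) (ENNReal.add_rpow_le_rpow_add _ _ hp)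
      _ ≤ (∑' i, f i) ^ p :=
          ENNReal.rpow_le_rpow (ENNReal.sum_le_tsum s) (by linarith)

private lemma aux_rpow_sum_le {ι : Type*} (s : Finset ι) (f : ι → ℝ≥0∞) {p : ℝ} (hp : 1 ≤ p) :
    (∑ i ∈ s, f i) ^ p ≤ (s.card : ℝ≥0∞) ^ p * ∑ i ∈ s, f i ^ p := by
  rcases s.eq_empty_or_nonempty with rfl | hs
  · simp [ENNReal.zero_rpow_of_pos (by linarith : (0:ℝ) < p)]
  obtain ⟨i₀, hi₀, hsup⟩ := Finset.exists_mem_eq_sup s hs f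
  have h1 : ∑ i ∈ s, f i ≤ (s.card : ℝ≥0∞) * f i₀ := by
    rw [← hsup]
    calc ∑ i ∈ s, f i ≤ ∑ _i ∈ s, s.sup f := Finset.sum_le_sum fun i hi => Finset.le_sup hi
    _ = (s.card : ℝ≥0∞) * s.sup f := by rw [Finset.sum_const, nsmul_eq_mul]
  calc (∑ i ∈ s, f i) ^ p ≤ ((s.card : ℝ≥0∞) * f i₀) ^ p :=
        ENNReal.rpow_le_rpow h1 (by linarith)
  _ = (s.card : ℝ≥0∞) ^ p * f i₀ ^ p := ENNReal.mul_rpow_of_nonneg _ _ (by linarith)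
  _ ≤ (s.card : ℝ≥0∞) ^ p * ∑ i ∈ s, f i ^ p := by
      gcongr
      exact Finset.single_le_sum (f := fun i => f i ^ p) (fun _ _ => zero_le) hi₀

private lemma aux_ind_rpow {X : Type*} (s : Set X) (y : X) {p : ℝ} (hp : 1 ≤ p) :
    (s.indicator (fun _ => (1 : ℝ≥0∞)) y) ^ p = s.indicator (fun _ => (1 : ℝ≥0∞)) y := by
  by_cases hy : y ∈ s <;>
    simp [Set.indicator_of_mem, Set.indicator_of_notMem, hy,
      ENNReal.zero_rpow_of_pos (by linarith : (0:ℝ) < p)]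

private lemma aux_integral_comp
    {X : Type*} [MeasurableSpace X] (μ : Measure X) {I : Type*} [Countable I]
    (U : I → Set X) (hUmeas : ∀ i, MeasurableSet (U i))
    (M : ℕ) (hNU : ∀ x : X, {i : I | x ∈ U i}.encard ≤ M)
    (g : X → ℝ≥0∞) (hg : Measurable g) (p : ℝ) (hp : 1 ≤ p) (a : I → ℝ≥0∞) :
    (∑' i, a i ^ p * ∫⁻ y in U i, g y ∂μ)
        ≤ ∫⁻ y, (∑' i, a i * (U i).indicator (fun _ => (1:ℝ≥0∞)) y) ^ p * g y ∂μ
    ∧ (∫⁻ y, (∑' i, a i * (U i).indicator (fun _ => (1:ℝ≥0∞)) y) ^ p * g y ∂μ)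
        ≤ (M : ℝ≥0∞) ^ p * ∑' i, a i ^ p * ∫⁻ y in U i, g y ∂μ := by
  classical
  have hp0 : (0:ℝ) < p := by linarith
  have hkey : (∫⁻ y, (∑' i, a i ^ p * (U i).indicator (fun _ => (1:ℝ≥0∞)) y) * g y ∂μ)
      = ∑' i, a i ^ p * ∫⁻ y in U i, g y ∂μ := by
    have h1 : ∀ y, (∑' i, a i ^ p * (U i).indicator (fun _ => (1:ℝ≥0∞)) y) * g y
        = ∑' i, a i ^ p * (U i).indicator g y := by
      intro y
      rw [← ENNReal.tsum_mul_right]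
      congr 1; ext i
      by_cases hy : y ∈ U i <;> simp [Set.indicator_of_mem, Set.indicator_of_notMem, hy, mul_assoc]
    simp_rw [h1]
    rw [lintegral_tsum (fun i => ((hg.indicator (hUmeas i)).const_mul _).aemeasurable)]
    congr 1; ext i
    rw [lintegral_const_mul _ (hg.indicator (hUmeas i)), lintegral_indicator (hUmeas i)]
  constructor
  · rw [← hkey]
    refine lintegral_mono fun y => ?_
    refine mul_le_mul_left ?_ _
    calc (∑' i, a i ^ p * (U i).indicator (fun _ => (1:ℝ≥0∞)) y)
        = ∑' i, (a i * (U i).indicator (fun _ => (1:ℝ≥0∞)) y) ^ p := by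
          congr 1; ext i
          rw [ENNReal.mul_rpow_of_nonneg _ _ (by linarith), aux_ind_rpow _ _ hp]
      _ ≤ (∑' i, a i * (U i).indicator (fun _ => (1:ℝ≥0∞)) y) ^ p :=
          aux_tsum_rpow_le _ hp
  · rw [← hkey, ← lintegral_const_mul _ (by
      have : Measurable fun y => (∑' i, a i ^ p * (U i).indicator (fun _ => (1:ℝ≥0∞)) y) := by
        exact Measurable.ennreal_tsum fun i => (measurable_const.indicator (hUmeas i)).const_mul _
      exact this.mul hg)]
    refine lintegral_mono fun y => ?_
    rw [← mul_assoc]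
    refine mul_le_mul_left ?_ _
    have hfin : {i : I | y ∈ U i}.Finite := by
      rw [← Set.encard_ne_top_iff]
      exact ne_top_of_le_ne_top (by simp) (hNU y)
    set t : Finset I := hfin.toFinset with ht
    have hcard : (t.card : ℝ≥0∞) ≤ (M : ℝ≥0∞) := by
      have := hNU y
      rw [hfin.encard_eq_coe_toFinset_card] at this
      exact_mod_cast this
    have hzero : ∀ i ∉ t, a i * (U i).indicator (fun _ => (1:ℝ≥0∞)) y = 0 := by
      intro i hi
      have : y ∉ U i := by simpa [ht, Set.Finite.mem_toFinset] using hi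
      simp [Set.indicator_of_notMem this]
    have hzero' : ∀ i ∉ t, a i ^ p * (U i).indicator (fun _ => (1:ℝ≥0∞)) y = 0 := by
      intro i hi
      have : y ∉ U i := by simpa [ht, Set.Finite.mem_toFinset] using hi
      simp [Set.indicator_of_notMem this]
    rw [tsum_eq_sum hzero, tsum_eq_sum hzero']
    calc (∑ i ∈ t, a i * (U i).indicator (fun _ => (1:ℝ≥0∞)) y) ^ p
        ≤ (t.card : ℝ≥0∞) ^ p * ∑ i ∈ t, (a i * (U i).indicator (fun _ => (1:ℝ≥0∞)) y) ^ p :=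
          aux_rpow_sum_le _ _ hp
      _ ≤ (M : ℝ≥0∞) ^ p * ∑ i ∈ t, a i ^ p * (U i).indicator (fun _ => (1:ℝ≥0∞)) y := by
          refine mul_le_mul' (ENNReal.rpow_le_rpow hcard (le_of_lt hp0))
            (Finset.sum_le_sum fun i _ => ?_)
          rw [ENNReal.mul_rpow_of_nonneg _ _ (by linarith), aux_ind_rpow _ _ hp]

private lemma aux_weight_comp
    {X : Type*} [MeasurableSpace X] (μ : Measure X)
    (Ui Vi : Set X) (hVmeas : MeasurableSet Vi) (hμV0 : μ Vi ≠ 0) (hμVfin : μ Vi ≠ ∞)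
    (g : X → ℝ≥0∞) (hg : Measurable g) (K : ℝ≥0∞)
    (hK : ∀ x ∈ Ui, ∀ y ∈ Vi, g x ≤ K * g y)
    (R : ℝ≥0∞) (hR : μ Ui ≤ R * μ Vi) :
    (∫⁻ x in Ui, g x ∂μ) ≤ K * R * ∫⁻ y in Vi, g y ∂μ := by
  have step1 : ∀ y ∈ Vi, (∫⁻ x in Ui, g x ∂μ) ≤ K * g y * μ Ui := by
    intro y hy
    calc (∫⁻ x in Ui, g x ∂μ) ≤ ∫⁻ _x in Ui, K * g y ∂μ :=
          setLIntegral_mono measurable_const (fun x hx => hK x hx y hy)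
    _ = K * g y * μ Ui := setLIntegral_const _ _
  have step2 : (∫⁻ x in Ui, g x ∂μ) * μ Vi ≤ (K * R * ∫⁻ y in Vi, g y ∂μ) * μ Vi := by
    calc (∫⁻ x in Ui, g x ∂μ) * μ Vi
        = ∫⁻ _y in Vi, (∫⁻ x in Ui, g x ∂μ) ∂μ := (setLIntegral_const _ _).symm
      _ ≤ ∫⁻ y in Vi, K * g y * μ Ui ∂μ := setLIntegral_mono' hVmeas step1
      _ = (K * μ Ui) * ∫⁻ y in Vi, g y ∂μ := by
          simp_rw [mul_comm (K * g _) (μ Ui), ← mul_assoc]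
          rw [lintegral_const_mul _ hg]
          ring
      _ ≤ (K * (R * μ Vi)) * ∫⁻ y in Vi, g y ∂μ := by gcongr
      _ = (K * R * ∫⁻ y in Vi, g y ∂μ) * μ Vi := by ring
  exact (ENNReal.mul_le_mul_iff_left hμV0 hμVfin).mp step2

/-- **Lemma 5.3 specialized to `Y = L^p_w` (flat spaces).** If the coverings
`(U_i)` and `(V_i)` are `m_w`-equivalent then `Y^♭(𝒰) = Y^♭(𝒱)` with
equivalent norms. -/
theorem stmt_7
    {X : Type*} [MeasurableSpace X] (μ : Measure X)
    {I : Type*} [Countable I] (U V : I → Set X)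
    (hUmeas : ∀ i, MeasurableSet (U i)) (hVmeas : ∀ i, MeasurableSet (V i))
    (hUpos : ∀ i, 0 < μ (U i)) (hUfin : ∀ i, μ (U i) < ∞)
    (hVpos : ∀ i, 0 < μ (V i)) (hVfin : ∀ i, μ (V i) < ∞)
    (hcovU : ∀ x : X, ∃ i, x ∈ U i) (hcovV : ∀ x : X, ∃ i, x ∈ V i)
    (N N' : ℕ)
    (hNU : ∀ x : X, {i : I | x ∈ U i}.encard ≤ N)
    (hNV : ∀ x : X, {i : I | x ∈ V i}.encard ≤ N')
    (w : X → ℝ) (hw : ∀ x, 0 < w x) (hwm : Measurable w)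
    (p : ℝ) (hp : 1 ≤ p)
    (C₁ C₂ : ℝ≥0∞) (hC₁ : 0 < C₁) (hC₂ : C₂ < ∞)
    (hμ₁ : ∀ i, C₁ * μ (U i) ≤ μ (V i)) (hμ₂ : ∀ i, μ (V i) ≤ C₂ * μ (U i))
    (C' : ℝ) (hC' : ∀ i, ∀ x ∈ U i, ∀ y ∈ V i, max (w x / w y) (w y / w x) ≤ C') :
    ∃ c C : ℝ≥0∞, 0 < c ∧ c ≤ C ∧ C < ∞ ∧ ∀ lam : I → ℂ,
      c * (∫⁻ y, (∑' i, (‖lam i‖₊ : ℝ≥0∞) * (V i).indicator (fun _ => (1 : ℝ≥0∞)) y) ^ p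
            * ENNReal.ofReal (w y) ^ p ∂μ) ^ (1/p)
        ≤ (∫⁻ y, (∑' i, (‖lam i‖₊ : ℝ≥0∞) * (U i).indicator (fun _ => (1 : ℝ≥0∞)) y) ^ p
            * ENNReal.ofReal (w y) ^ p ∂μ) ^ (1/p)
      ∧ (∫⁻ y, (∑' i, (‖lam i‖₊ : ℝ≥0∞) * (U i).indicator (fun _ => (1 : ℝ≥0∞)) y) ^ p
            * ENNReal.ofReal (w y) ^ p ∂μ) ^ (1/p)
        ≤ C * (∫⁻ y, (∑' i, (‖lam i‖₊ : ℝ≥0∞) * (V i).indicator (fun _ => (1 : ℝ≥0∞)) y) ^ p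
            * ENNReal.ofReal (w y) ^ p ∂μ) ^ (1/p) := by
  have hp0 : (0:ℝ) < p := by linarith
  have hp0' : (0:ℝ) < 1/p := by positivity
  rcases isEmpty_or_nonempty I with hI | hI
  · refine ⟨1, 1, one_pos, le_refl 1, ENNReal.one_lt_top, fun lam => ?_⟩
    simp [tsum_empty, ENNReal.zero_rpow_of_pos hp0, ENNReal.zero_rpow_of_pos hp0']
  obtain ⟨i₀⟩ := hI
  set g : X → ℝ≥0∞ := fun y => ENNReal.ofReal (w y) ^ p with hgdef
  have hg : Measurable g := (hwm.ennreal_ofReal).pow measurable_const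
  -- derived bounds on the constants
  have hC₁fin : C₁ ≠ ∞ := by
    intro h
    have h1 := hμ₁ i₀
    rw [h, ENNReal.top_mul (hUpos i₀).ne'] at h1
    exact (hVfin i₀).ne (top_le_iff.mp h1)
  have hC₂pos : C₂ ≠ 0 := by
    intro h
    have h1 := hμ₂ i₀
    rw [h, zero_mul] at h1
    exact (hVpos i₀).ne' (le_zero_iff.mp h1)
  -- the weight constant
  set D : ℝ≥0∞ := ENNReal.ofReal (max C' 1) with hDdef
  have hD1 : 1 ≤ D := by
    rw [hDdef]
    exact ENNReal.one_le_ofReal.2 (le_max_right _ _)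
  have hDfin : D ≠ ∞ := ENNReal.ofReal_ne_top
  have hD0 : D ≠ 0 := by positivity
  -- pointwise weight comparison
  have hgUV : ∀ i, ∀ x ∈ U i, ∀ y ∈ V i, g x ≤ D ^ p * g y ∧ g y ≤ D ^ p * g x := by
    intro i x hx y hy
    have hmax := hC' i x hx y hy
    have hC'le : max (w x / w y) (w y / w x) ≤ max C' 1 := le_trans hmax (le_max_left _ _)
    have h1 : w x ≤ max C' 1 * w y := by
      have := (div_le_iff₀ (hw y)).1 (le_trans (le_max_left _ _) hC'le)
      linarith [this]
    have h2 : w y ≤ max C' 1 * w x := by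
      have := (div_le_iff₀ (hw x)).1 (le_trans (le_max_right _ _) hC'le)
      linarith [this]
    have key : ∀ u v : ℝ, u ≤ max C' 1 * v →
        ENNReal.ofReal u ^ p ≤ D ^ p * ENNReal.ofReal v ^ p := by
      intro u v huv
      calc ENNReal.ofReal u ^ p ≤ (ENNReal.ofReal (max C' 1 * v)) ^ p :=
            ENNReal.rpow_le_rpow (ENNReal.ofReal_le_ofReal huv) hp0.le
        _ = (D * ENNReal.ofReal v) ^ p := by
            rw [ENNReal.ofReal_mul (by positivity : (0:ℝ) ≤ max C' 1)]
        _ = D ^ p * ENNReal.ofReal v ^ p := ENNReal.mul_rpow_of_nonneg _ _ hp0.le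
    exact ⟨key _ _ h1, key _ _ h2⟩
  -- comparison of the local integrals
  have hAB : ∀ i, (∫⁻ x in U i, g x ∂μ) ≤ (D ^ p * C₁⁻¹) * ∫⁻ y in V i, g y ∂μ := by
    intro i
    refine aux_weight_comp μ (U i) (V i) (hVmeas i) (hVpos i).ne' (hVfin i).ne g hg
      (D ^ p) (fun x hx y hy => (hgUV i x hx y hy).1) C₁⁻¹ ?_
    calc μ (U i) = C₁⁻¹ * (C₁ * μ (U i)) := by
          rw [← mul_assoc, ENNReal.inv_mul_cancel hC₁.ne' hC₁fin, one_mul]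
      _ ≤ C₁⁻¹ * μ (V i) := by gcongr; exact hμ₁ i
  have hBA : ∀ i, (∫⁻ y in V i, g y ∂μ) ≤ (D ^ p * C₂) * ∫⁻ x in U i, g x ∂μ := by
    intro i
    exact aux_weight_comp μ (V i) (U i) (hUmeas i) (hUpos i).ne' (hUfin i).ne g hg
      (D ^ p) (fun y hy x hx => (hgUV i x hx y hy).2) C₂ (hμ₂ i)
  -- overlap constants
  set M : ℕ := max N 1 with hMdef
  set M' : ℕ := max N' 1 with hM'def
  have hNU' : ∀ x : X, {i : I | x ∈ U i}.encard ≤ M :=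
    fun x => le_trans (hNU x) (by exact_mod_cast Nat.cast_le.2 (le_max_left N 1))
  have hNV' : ∀ x : X, {i : I | x ∈ V i}.encard ≤ M' :=
    fun x => le_trans (hNV x) (by exact_mod_cast Nat.cast_le.2 (le_max_left N' 1))
  -- global constants
  set Ku : ℝ≥0∞ := (M : ℝ≥0∞) ^ p * (D ^ p * C₁⁻¹) with hKu
  set Kl : ℝ≥0∞ := (M' : ℝ≥0∞) ^ p * (D ^ p * C₂) with hKl
  have hM1 : (1:ℝ≥0∞) ≤ (M : ℝ≥0∞) := by
    exact_mod_cast Nat.one_le_cast.2 (le_max_right N 1)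
  have hM'1 : (1:ℝ≥0∞) ≤ (M' : ℝ≥0∞) := by
    exact_mod_cast Nat.one_le_cast.2 (le_max_right N' 1)
  have hMp0 : (M:ℝ≥0∞) ^ p ≠ 0 :=
    (ENNReal.rpow_pos (lt_of_lt_of_le one_pos hM1) (ENNReal.natCast_ne_top M)).ne'
  have hM'p0 : (M':ℝ≥0∞) ^ p ≠ 0 :=
    (ENNReal.rpow_pos (lt_of_lt_of_le one_pos hM'1) (ENNReal.natCast_ne_top M')).ne'
  have hMpfin : (M:ℝ≥0∞) ^ p ≠ ∞ :=
    ENNReal.rpow_ne_top_of_nonneg hp0.le (ENNReal.natCast_ne_top M)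
  have hM'pfin : (M':ℝ≥0∞) ^ p ≠ ∞ :=
    ENNReal.rpow_ne_top_of_nonneg hp0.le (ENNReal.natCast_ne_top M')
  have hDp0 : D ^ p ≠ 0 := (ENNReal.rpow_pos (pos_iff_ne_zero.2 hD0) hDfin).ne'
  have hDpfin : D ^ p ≠ ∞ := ENNReal.rpow_ne_top_of_nonneg hp0.le hDfin
  have hKu0 : Ku ≠ 0 :=
    mul_ne_zero hMp0 (mul_ne_zero hDp0 (ENNReal.inv_ne_zero.2 hC₁fin))
  have hKufin : Ku ≠ ∞ :=
    ENNReal.mul_ne_top hMpfin (ENNReal.mul_ne_top hDpfin (ENNReal.inv_ne_top.2 hC₁.ne'))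
  have hKl0 : Kl ≠ 0 := mul_ne_zero hM'p0 (mul_ne_zero hDp0 hC₂pos)
  have hKlfin : Kl ≠ ∞ := ENNReal.mul_ne_top hM'pfin (ENNReal.mul_ne_top hDpfin hC₂.ne)
  refine ⟨min (Kl ^ (1/p))⁻¹ (Ku ^ (1/p)), Ku ^ (1/p), ?_, min_le_right _ _, ?_, fun lam => ?_⟩
  · refine lt_min ?_ ?_
    · rw [ENNReal.inv_pos]
      exact ENNReal.rpow_ne_top_of_nonneg hp0'.le hKlfin
    · exact ENNReal.rpow_pos (pos_iff_ne_zero.2 hKu0) hKufin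
  · exact ENNReal.rpow_lt_top_of_nonneg hp0'.le hKufin
  · set a : I → ℝ≥0∞ := fun i => (‖lam i‖₊ : ℝ≥0∞) with hadef
    obtain ⟨hlowU, hupU⟩ := aux_integral_comp μ U hUmeas M hNU' g hg p hp a
    obtain ⟨hlowV, hupV⟩ := aux_integral_comp μ V hVmeas M' hNV' g hg p hp a
    set IU := ∫⁻ y, (∑' i, a i * (U i).indicator (fun _ => (1:ℝ≥0∞)) y) ^ p * g y ∂μ with hIU
    set IV := ∫⁻ y, (∑' i, a i * (V i).indicator (fun _ => (1:ℝ≥0∞)) y) ^ p * g y ∂μ with hIV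
    have chain1 : IU ≤ Ku * IV := by
      calc IU ≤ (M : ℝ≥0∞) ^ p * ∑' i, a i ^ p * ∫⁻ y in U i, g y ∂μ := hupU
        _ ≤ (M : ℝ≥0∞) ^ p * ∑' i, a i ^ p * ((D ^ p * C₁⁻¹) * ∫⁻ y in V i, g y ∂μ) := by
            gcongr with i
            exact hAB i
        _ = Ku * ∑' i, a i ^ p * ∫⁻ y in V i, g y ∂μ := by
            rw [hKu, mul_assoc]
            congr 1
            rw [← ENNReal.tsum_mul_left]
            congr 1; ext i; ring
        _ ≤ Ku * IV := mul_le_mul_right hlowV _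
    have chain2 : IV ≤ Kl * IU := by
      calc IV ≤ (M' : ℝ≥0∞) ^ p * ∑' i, a i ^ p * ∫⁻ y in V i, g y ∂μ := hupV
        _ ≤ (M' : ℝ≥0∞) ^ p * ∑' i, a i ^ p * ((D ^ p * C₂) * ∫⁻ y in U i, g y ∂μ) := by
            gcongr with i
            exact hBA i
        _ = Kl * ∑' i, a i ^ p * ∫⁻ y in U i, g y ∂μ := by
            rw [hKl, mul_assoc]
            congr 1
            rw [← ENNReal.tsum_mul_left]
            congr 1; ext i; ring
        _ ≤ Kl * IU := mul_le_mul_right hlowU _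
    constructor
    · calc min (Kl ^ (1/p))⁻¹ (Ku ^ (1/p)) * IV ^ (1/p)
          ≤ (Kl ^ (1/p))⁻¹ * IV ^ (1/p) := mul_le_mul_left (min_le_left _ _) _
        _ ≤ (Kl ^ (1/p))⁻¹ * (Kl * IU) ^ (1/p) :=
            mul_le_mul_right (ENNReal.rpow_le_rpow chain2 hp0'.le) _
        _ = (Kl ^ (1/p))⁻¹ * (Kl ^ (1/p) * IU ^ (1/p)) := by
            rw [ENNReal.mul_rpow_of_nonneg Kl IU hp0'.le]
        _ = IU ^ (1/p) := by
            rw [← mul_assoc, ENNReal.inv_mul_cancel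
              (by
                intro h
                exact hKl0 ((ENNReal.rpow_eq_zero_iff.mp h).elim (fun h => h.1)
                  (fun h => absurd h.2 (not_lt.2 hp0'.le))))
              (ENNReal.rpow_ne_top_of_nonneg hp0'.le hKlfin), one_mul]
    · calc IU ^ (1/p) ≤ (Ku * IV) ^ (1/p) := ENNReal.rpow_le_rpow chain1 hp0'.le
        _ = Ku ^ (1/p) * IV ^ (1/p) := ENNReal.mul_rpow_of_nonneg _ _ hp0'.le
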